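/- arXiv:1312.2200 — 2 statements merged into one kernel-verified Lean document; each statement's English description precedes it below -/
import Mathlib

section
/- Let m, n, h ∈ ℕ with 0 < h ≤ min(m,n) and r = m+n−2h, and let ε_i^j = ε_i^j(m,n,h) be the EPOSIC coefficients. Then for every 0 ≤ i ≤ r there exist indices j₁ < j₂ with 0 ≤ j₁, j₂ ≤ n such that ε_i^{j₁} ≠ 0 and ε_i^{j₂} ≠ 0. -/
open scoped BigOperators Matrix
open Matrix

/-- Binomial coefficient `C(a, b)` with an integer lower argument (zero if `b < 0`),
as a real number. -/
noncomputable def Cb (a : ℕ) (b : ℤ) : ℝ :=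
  if 0 ≤ b then (a.choose b.toNat : ℝ) else 0

/-- The coefficient `β_{i,s,j}` of the EPOSIC channel `Φ_{m,n,h}`. -/
noncomputable def epsBeta (m n h : ℕ) (i s j : ℤ) : ℝ :=
  ((-1 : ℝ) ^ s * Cb h s * Cb (n - h) (j - s) * Cb (m - h) (i - j + s)) /
    Real.sqrt (Cb (m + n - 2 * h) i * Cb m (i - j + h) * Cb n j *
      ∑ k ∈ Finset.range (h + 1),
        (h.choose k : ℝ) ^ 2 / ((m.choose (h - k) : ℝ) * (n.choose k : ℝ)))

/-- The coefficient `ε_i^j = ε_i^j(m,n,h)` of the EPOSIC channel `Φ_{m,n,h}`. -/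
noncomputable def eps (m n h : ℕ) (i j : ℤ) : ℝ :=
  ∑ s ∈ Finset.Icc (max 0 (max (j - i) (j + h - n)))
      (min (h : ℤ) (min j (j + m - i - h))),
    epsBeta m n h i s j

/-- The `j`-th EPOSIC Kraus operator of `Φ_{m,n,h}`: the `(m+1) × (r+1)` matrix
(`r = m + n - 2h`) whose `(i - j + h, i)` entry is `ε_i^j` for
`max{0, j-h} ≤ i ≤ min{r, m-h+j}`, all other entries being `0`. -/
noncomputable def kraus (m n h j : ℕ) : Matrix (Fin (m + 1)) (Fin (m + n - 2 * h + 1)) ℂ :=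
  Matrix.of fun l i =>
    if (l : ℤ) = (i : ℤ) - j + h ∧ max 0 ((j : ℤ) - h) ≤ (i : ℤ) ∧
        (i : ℤ) ≤ min ((m : ℤ) + n - 2 * h) ((m : ℤ) - h + j)
      then ((eps m n h i j : ℝ) : ℂ) else 0

/-- The EPOSIC channel `Φ_{m,n,h}`. -/
noncomputable def eposic (m n h : ℕ)
    (A : Matrix (Fin (m + n - 2 * h + 1)) (Fin (m + n - 2 * h + 1)) ℂ) :
    Matrix (Fin (m + 1)) (Fin (m + 1)) ℂ :=
  ∑ j ∈ Finset.range (n + 1), kraus m n h j * A * (kraus m n h j)ᴴ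

lemma Cb_pos (a : ℕ) (b : ℤ) (h1 : 0 ≤ b) (h2 : b ≤ (a : ℤ)) : 0 < Cb a b := by
  rw [Cb, if_pos h1]
  exact_mod_cast Nat.choose_pos (by omega : b.toNat ≤ a)

lemma eps_ne_of (m n h : ℕ) (i s j : ℤ) (hm : h ≤ m) (hn : h ≤ n)
    (hl : max 0 (max (j - i) (j + (h : ℤ) - n)) = s)
    (hu : min (h : ℤ) (min j (j + (m : ℤ) - i - h)) = s)
    (h1 : 0 ≤ s) (h2 : s ≤ (h : ℤ)) (h3 : 0 ≤ j - s) (h4 : j - s ≤ (n : ℤ) - h)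
    (h5 : 0 ≤ i - j + s) (h6 : i - j + s ≤ (m : ℤ) - h)
    (hi0 : 0 ≤ i) (hir : i ≤ (m : ℤ) + n - 2 * h) :
    eps m n h i j ≠ 0 := by
  have heq : eps m n h i j = epsBeta m n h i s j := by
    rw [eps, hl, hu, Finset.Icc_self, Finset.sum_singleton]
  rw [heq, epsBeta]
  have hS : 0 < ∑ k ∈ Finset.range (h + 1),
      (h.choose k : ℝ) ^ 2 / ((m.choose (h - k) : ℝ) * (n.choose k : ℝ)) := by
    apply Finset.sum_pos'
    · intro k _; positivity
    · refine ⟨0, Finset.mem_range.2 (Nat.succ_pos h), ?_⟩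
      have := Nat.choose_pos hm
      simp only [Nat.choose_zero_right, Nat.sub_zero, Nat.cast_one]
      positivity
  have hden : 0 < Cb (m + n - 2 * h) i * Cb m (i - j + h) * Cb n j *
      ∑ k ∈ Finset.range (h + 1),
        (h.choose k : ℝ) ^ 2 / ((m.choose (h - k) : ℝ) * (n.choose k : ℝ)) := by
    have c1 : 0 < Cb (m + n - 2 * h) i := Cb_pos _ _ hi0 (by omega)
    have c2 : 0 < Cb m (i - j + h) := Cb_pos _ _ (by omega) (by omega)
    have c3 : 0 < Cb n j := Cb_pos _ _ (by omega) (by omega)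
    positivity
  apply div_ne_zero
  · have c1 : 0 < Cb h s := Cb_pos _ _ h1 h2
    have c2 : 0 < Cb (n - h) (j - s) := Cb_pos _ _ h3 (by push_cast [Nat.cast_sub hn] at h4 ⊢; omega)
    have c3 : 0 < Cb (m - h) (i - j + s) := Cb_pos _ _ h5 (by push_cast [Nat.cast_sub hm] at h6 ⊢; omega)
    have : (-1 : ℝ) ^ s ≠ 0 := zpow_ne_zero s (by norm_num)
    exact mul_ne_zero (mul_ne_zero (mul_ne_zero this c1.ne') c2.ne') c3.ne'
  · exact (Real.sqrt_pos.mpr hden).ne'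

theorem stmt4 (m n h : ℕ) (h0 : 0 < h) (hh : h ≤ min m n) :
    ∀ i : ℤ, 0 ≤ i → i ≤ (m : ℤ) + n - 2 * h →
      ∃ j₁ j₂ : ℤ, j₁ < j₂ ∧ 0 ≤ j₁ ∧ j₁ ≤ n ∧ 0 ≤ j₂ ∧ j₂ ≤ n ∧
        eps m n h i j₁ ≠ 0 ∧ eps m n h i j₂ ≠ 0 := by
  intro i hi0 hir
  have hm : h ≤ m := le_trans hh (min_le_left _ _)
  have hn : h ≤ n := le_trans hh (min_le_right _ _)
  refine ⟨max 0 (i - m + h), min (n : ℤ) (i + h), by omega, by omega, by omega, by omega, by omega,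
    ?_, ?_⟩
  · rcases le_or_gt i ((m : ℤ) - h) with hc | hc
    · have : max 0 (i - (m : ℤ) + h) = 0 := by omega
      rw [this]
      exact eps_ne_of m n h i 0 0 hm hn (by omega) (by omega) (by omega) (by omega)
        (by omega) (by omega) (by omega) (by omega) hi0 hir
    · have : max 0 (i - (m : ℤ) + h) = i - m + h := by omega
      rw [this]
      exact eps_ne_of m n h i 0 (i - m + h) hm hn (by omega) (by omega) (by omega) (by omega)
        (by omega) (by omega) (by omega) (by omega) hi0 hir
  · rcases le_or_gt (i + (h : ℤ)) n with hc | hc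
    · have : min (n : ℤ) (i + h) = i + h := by omega
      rw [this]
      exact eps_ne_of m n h i h (i + h) hm hn (by omega) (by omega) (by omega) (by omega)
        (by omega) (by omega) (by omega) (by omega) hi0 hir
    · have : min (n : ℤ) (i + h) = n := by omega
      rw [this]
      exact eps_ne_of m n h i h n hm hn (by omega) (by omega) (by omega) (by omega)
        (by omega) (by omega) (by omega) (by omega) hi0 hir
end

section
/- Let m ∈ ℕ with m ≥ 1, let T_0, T_1 be the EPOSIC Kraus operators of Φ_{m,1,1}, and let w ∈ ℂ^m be a unit vector. Set u_0 = T_0 w, u_1 = T_1 w and R = ‖u_0‖²‖u_1‖² − |⟨u_0, u_1⟩|². Then 0 ≤ 1 − 4R ≤ 1, and the (m+1)×(m+1) Hermitian matrix Φ_{m,1,1}(ww*) = T_0 ww* T_0* + T_1 ww* T_1* has eigenvalues (1 + sqrt(1−4R))/2 and (1 − sqrt(1−4R))/2, together with the eigenvalue 0 with multiplicity m−1. -/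
open scoped BigOperators Matrix
open Matrix

/-- The pure state `w w*` associated to a vector `w`. -/
noncomputable def pureState {d : ℕ} (w : EuclideanSpace ℂ (Fin d)) :
    Matrix (Fin d) (Fin d) ℂ :=
  Matrix.of fun i j => w i * (starRingEnd ℂ) (w j)

open scoped Classical in
/-- The von Neumann entropy (base-2) of a matrix: `-∑ λᵢ log₂ λᵢ` over its eigenvalues
if it is Hermitian, and `0` otherwise.  (Note `Real.logb 2 0 = 0`, giving the
convention `0 · log₂ 0 = 0`.) -/
noncomputable def entropy {d : ℕ} (ρ : Matrix (Fin d) (Fin d) ℂ) : ℝ :=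
  if h : ρ.IsHermitian then -∑ i, h.eigenvalues i * Real.logb 2 (h.eigenvalues i) else 0

/-- The minimal output entropy of a channel: the infimum of the entropies of the outputs
of pure-state inputs. -/
noncomputable def Smin {d e : ℕ}
    (Φ : Matrix (Fin d) (Fin d) ℂ → Matrix (Fin e) (Fin e) ℂ) : ℝ :=
  sInf {x | ∃ w : EuclideanSpace ℂ (Fin d), ‖w‖ = 1 ∧ x = entropy (Φ (pureState w))}

/-- For a vector `w` in the domain of `Φ_{m,1,1}`, with `u₀ = T₀ w` and `u₁ = T₁ w`
(the images of `w` under the two EPOSIC Kraus operators of `Φ_{m,1,1}`), the quantity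
`R(w) = ‖u₀‖² ‖u₁‖² - |⟨u₀, u₁⟩|²`. -/
noncomputable def Rval (m : ℕ) (w : EuclideanSpace ℂ (Fin (m + 1 - 2 * 1 + 1))) : ℝ :=
  (∑ i, Complex.normSq ((kraus m 1 1 0).mulVec (fun i => w i) i)) *
      (∑ i, Complex.normSq ((kraus m 1 1 1).mulVec (fun i => w i) i)) -
    Complex.normSq (∑ i, (starRingEnd ℂ) ((kraus m 1 1 0).mulVec (fun i => w i) i) *
      ((kraus m 1 1 1).mulVec (fun i => w i) i))

section AUX
lemma Cb_natCast (a k : ℕ) : Cb a (k : ℤ) = (a.choose k : ℝ) := by simp [Cb]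

lemma Cb_eq (a : ℕ) (b : ℤ) (k : ℕ) (h : b = (k : ℤ)) : Cb a b = (a.choose k : ℝ) := by
  rw [h, Cb_natCast]

lemma sumS (m : ℕ) :
    (∑ k ∈ Finset.range (1 + 1),
        ((Nat.choose 1 k : ℝ)) ^ 2 / ((m.choose (1 - k) : ℝ) * (Nat.choose 1 k : ℝ)))
      = 1 / m + 1 := by
  simp [Finset.sum_range_succ, Nat.choose_one_right]

lemma eps0_eq (m i : ℕ) (hm : 1 ≤ m) (hi : i < m) :
    eps m 1 1 (i : ℤ) 0 =
      ((m-1).choose i : ℝ) /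
        Real.sqrt (((m-1).choose i : ℝ) * (m.choose (i+1)) * (1/m + 1)) := by
  unfold eps
  push_cast
  have hl : max 0 (max ((0:ℤ) - i) 0) = 0 := by omega
  have hu : min (1:ℤ) (min 0 (0 + (m:ℤ) - i - 1)) = 0 := by omega
  rw [hl, hu, Finset.Icc_self, Finset.sum_singleton]
  unfold epsBeta
  rw [Cb_eq 1 0 0 (by norm_num), Cb_eq (1-1) _ 0 (by norm_num),
      Cb_eq (m-1) _ i (by push_cast; ring), Cb_eq (m+1-2*1) _ i (by norm_num),
      Cb_eq m _ (i+1) (by push_cast; ring), sumS,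
      show m + 1 - 2 * 1 = m - 1 by omega]
  norm_num

lemma eps1_eq (m i : ℕ) (hm : 1 ≤ m) (hi : i < m) :
    eps m 1 1 (i : ℤ) 1 =
      -(((m-1).choose i : ℝ) /
        Real.sqrt (((m-1).choose i : ℝ) * (m.choose i) * (1/m + 1))) := by
  unfold eps
  push_cast
  have hl : max 0 (max ((1:ℤ) - i) 1) = 1 := by omega
  have hu : min (1:ℤ) (min 1 (1 + (m:ℤ) - i - 1)) = 1 := by omega
  rw [hl, hu, Finset.Icc_self, Finset.sum_singleton]
  unfold epsBeta
  rw [Cb_eq 1 1 1 (by norm_num), Cb_eq (1-1) _ 0 (by norm_num),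
      Cb_eq (m-1) _ i (by push_cast; ring), Cb_eq (m+1-2*1) _ i (by norm_num),
      Cb_eq m _ i (by push_cast; ring), sumS,
      show m + 1 - 2 * 1 = m - 1 by omega]
  norm_num
  rw [neg_div]

lemma sq_div_sqrt (x d : ℝ) (hx : 0 ≤ x) (hd : 0 ≤ d) : (x / Real.sqrt d)^2 = x^2 / d := by
  rw [div_pow, Real.sq_sqrt hd]

lemma eps_sq (m i : ℕ) (hm : 1 ≤ m) (hi : i < m)
    (e0 e1 : ℝ)
    (h0 : e0 = ((m-1).choose i : ℝ) /
        Real.sqrt (((m-1).choose i : ℝ) * (m.choose (i+1)) * (1/m + 1)))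
    (h1 : e1 = -(((m-1).choose i : ℝ) /
        Real.sqrt (((m-1).choose i : ℝ) * (m.choose i) * (1/m + 1)))) :
    e0^2 = (i+1)/(m+1) ∧ e1^2 = ((m:ℝ)-i)/(m+1) := by
  have hc1 : (0:ℝ) < ((m-1).choose i : ℝ) := by
    exact_mod_cast Nat.choose_pos (by omega)
  have hc2 : (0:ℝ) < (m.choose (i+1) : ℝ) := by
    exact_mod_cast Nat.choose_pos (by omega)
  have hc3 : (0:ℝ) < (m.choose i : ℝ) := by
    exact_mod_cast Nat.choose_pos (by omega)
  have hmpos : (0:ℝ) < m := by exact_mod_cast hm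
  have hS : (0:ℝ) < 1/m + 1 := by positivity
  have key1 : (m:ℝ) * ((m-1).choose i : ℝ) = (m.choose (i+1) : ℝ) * (i+1) := by
    have := Nat.add_one_mul_choose_eq (m-1) i
    have h' : (m:ℕ) * ((m-1).choose i) = (m.choose (i+1)) * (i+1) := by
      rw [show m = (m-1).succ by omega] at *
      simpa [Nat.succ_eq_add_one] using this
    exact_mod_cast h'
  have key2 : ((m-1).choose i : ℝ) * m = (m.choose i : ℝ) * ((m:ℝ) - i) := by
    have := Nat.choose_mul_succ_eq (m-1) i
    rw [show m - 1 + 1 = m by omega] at this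
    have hcast : (((m-1).choose i * m : ℕ) : ℝ) = ((m.choose i * (m - i) : ℕ) : ℝ) := by
      exact_mod_cast this
    push_cast [Nat.cast_sub (le_of_lt hi)] at hcast
    linarith [hcast]
  have hSm : (1/(m:ℝ) + 1) = ((m:ℝ)+1)/m := by field_simp; ring
  constructor
  · rw [h0, sq_div_sqrt _ _ (le_of_lt hc1) (by positivity), hSm]
    rw [div_eq_div_iff (by positivity) (by positivity)]
    field_simp
    linear_combination key1
  · rw [h1, neg_pow, sq_div_sqrt _ _ (le_of_lt hc1) (by positivity), hSm]
    rw [show (-1:ℝ)^2 = 1 by norm_num, one_mul]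
    rw [div_eq_div_iff (by positivity) (by positivity)]
    field_simp
    linear_combination key2

lemma kraus0_apply (m : ℕ) (hm : 1 ≤ m) (l : Fin (m+1)) (i : Fin (m+1-2*1+1)) :
    kraus m 1 1 0 l i = if (l:ℕ) = (i:ℕ)+1 then ((eps m 1 1 (i:ℕ) 0 : ℝ):ℂ) else 0 := by
  have hi := i.isLt
  have hl := l.isLt
  simp only [kraus, Matrix.of_apply]
  by_cases h : (l:ℕ) = (i:ℕ)+1
  · rw [if_pos h, if_pos ⟨by push_cast; omega, by push_cast; omega, by push_cast; omega⟩]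
    norm_num
  · rw [if_neg, if_neg h]
    rintro ⟨h1, h2, h3⟩
    push_cast at h1
    omega

lemma kraus1_apply (m : ℕ) (hm : 1 ≤ m) (l : Fin (m+1)) (i : Fin (m+1-2*1+1)) :
    kraus m 1 1 1 l i = if (l:ℕ) = (i:ℕ) then ((eps m 1 1 (i:ℕ) 1 : ℝ):ℂ) else 0 := by
  have hi := i.isLt
  have hl := l.isLt
  simp only [kraus, Matrix.of_apply]
  by_cases h : (l:ℕ) = (i:ℕ)
  · rw [if_pos h, if_pos ⟨by push_cast; omega, by push_cast; omega, by push_cast; omega⟩]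
    norm_num
  · rw [if_neg, if_neg h]
    rintro ⟨h1, h2, h3⟩
    push_cast at h1
    omega

lemma sum_ite_prod (m : ℕ) (c c' : ℕ) (v v' : ℂ) :
    (∑ l : Fin (m+1), star (if (l:ℕ) = c then v else 0) * (if (l:ℕ) = c' then v' else 0))
      = if c = c' ∧ c < m+1 then star v * v' else 0 := by
  split_ifs with h
  · obtain ⟨rfl, hc⟩ := h
    rw [Finset.sum_eq_single (⟨c, hc⟩ : Fin (m+1))]
    · simp
    · intro l _ hl
      rw [if_neg, star_zero, zero_mul]
      simpa [Fin.ext_iff] using hl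
    · simp
  · apply Finset.sum_eq_zero
    intro l _
    split_ifs with h1 h2
    · exact absurd ⟨h1 ▸ h2, h1 ▸ l.isLt⟩ h
    all_goals simp

end AUX

lemma eps_sq_add (m i : ℕ) (hm : 1 ≤ m) (hi : i < m) :
    (eps m 1 1 (i:ℤ) 0)^2 + (eps m 1 1 (i:ℤ) 1)^2 = 1 := by
  obtain ⟨h0, h1⟩ := eps_sq m i hm hi _ _ (eps0_eq m i hm hi) (eps1_eq m i hm hi)
  rw [h0, h1]
  have : ((m:ℝ)+1) ≠ 0 := by positivity
  field_simp
  ring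

lemma kraus_sum (m : ℕ) (hm : 1 ≤ m) :
    (kraus m 1 1 0)ᴴ * kraus m 1 1 0 + (kraus m 1 1 1)ᴴ * kraus m 1 1 1 = 1 := by
  ext i i'
  have hi := i.isLt
  have hi' := i'.isLt
  simp only [Matrix.add_apply, Matrix.mul_apply, Matrix.conjTranspose_apply]
  calc (∑ l, star (kraus m 1 1 0 l i) * kraus m 1 1 0 l i') +
        (∑ l, star (kraus m 1 1 1 l i) * kraus m 1 1 1 l i')
      = (if (i:ℕ)+1 = (i':ℕ)+1 ∧ (i:ℕ)+1 < m+1 then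
            star ((eps m 1 1 (i:ℕ) 0 : ℝ):ℂ) * ((eps m 1 1 (i':ℕ) 0 : ℝ):ℂ) else 0) +
        (if (i:ℕ) = (i':ℕ) ∧ (i:ℕ) < m+1 then
            star ((eps m 1 1 (i:ℕ) 1 : ℝ):ℂ) * ((eps m 1 1 (i':ℕ) 1 : ℝ):ℂ) else 0) := by
        rw [← sum_ite_prod m ((i:ℕ)+1) ((i':ℕ)+1), ← sum_ite_prod m (i:ℕ) (i':ℕ)]
        congr 1 <;> apply Finset.sum_congr rfl <;> intro l _
        · rw [kraus0_apply m hm l i, kraus0_apply m hm l i']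
        · rw [kraus1_apply m hm l i, kraus1_apply m hm l i']
    _ = (1 : Matrix (Fin (m+1-2*1+1)) (Fin (m+1-2*1+1)) ℂ) i i' := by
        by_cases h : i = i'
        · subst h
          rw [if_pos ⟨rfl, by omega⟩, if_pos ⟨rfl, by omega⟩, Matrix.one_apply_eq]
          rw [Complex.star_def, Complex.conj_ofReal, Complex.conj_ofReal,
              ← Complex.ofReal_mul, ← Complex.ofReal_mul, ← Complex.ofReal_add]
          rw [show (eps m 1 1 (i:ℕ) 0) * (eps m 1 1 (i:ℕ) 0) +
                (eps m 1 1 (i:ℕ) 1) * (eps m 1 1 (i:ℕ) 1) =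
                (eps m 1 1 (i:ℕ) 0)^2 + (eps m 1 1 (i:ℕ) 1)^2 by ring,
              eps_sq_add m i hm (by omega)]
          norm_num
        · have hne : (i:ℕ) ≠ (i':ℕ) := fun hc => h (Fin.ext hc)
          rw [if_neg (by omega), if_neg (by omega), Matrix.one_apply_ne h]
          norm_num

lemma herm_traces {n : ℕ} (M : Matrix (Fin n) (Fin n) ℂ) (hM : M.IsHermitian) :
    M.trace = ∑ i, (hM.eigenvalues i : ℂ) ∧
      (M * M).trace = ∑ i, ((hM.eigenvalues i : ℝ)^2 : ℂ) := by
  set U := (Matrix.IsHermitian.eigenvectorUnitary hM : Matrix (Fin n) (Fin n) ℂ) with hUdef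
  set D := Matrix.diagonal (RCLike.ofReal ∘ hM.eigenvalues : Fin n → ℂ) with hDdef
  have hspec : M = U * D * star U := hM.spectral_theorem
  have h2 : star U * U = 1 := Matrix.mem_unitaryGroup_iff'.mp (Matrix.IsHermitian.eigenvectorUnitary hM).2
  constructor
  · conv_lhs => rw [hspec]
    rw [Matrix.trace_mul_cycle, h2, one_mul, hDdef, Matrix.trace_diagonal]
    simp [RCLike.ofReal]
  · have e1 : (U * D * star U) * (U * D * star U) = U * D * (star U * U) * D * star U := by
      simp only [Matrix.mul_assoc]
    conv_lhs => rw [hspec]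
    rw [e1, h2, mul_one, Matrix.mul_assoc U D D, Matrix.trace_mul_cycle,
        ← Matrix.mul_assoc, h2, one_mul, hDdef, Matrix.diagonal_mul_diagonal,
        Matrix.trace_diagonal]
    simp [RCLike.ofReal]
    norm_num [sq]

open scoped Classical in
lemma perm_part (N : ℕ) (hN : 1 ≤ N) (e : Fin (N+1) → ℝ) (R : ℝ)
    (hnonneg : ∀ i, 0 ≤ e i)
    (hcard : (Finset.univ.filter (fun i => e i ≠ 0)).card ≤ 2)
    (hsum : ∑ i, e i = 1) (hsq : ∑ i, (e i)^2 = 1 - 2*R) :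
    0 ≤ 1 - 4*R ∧ 1 - 4*R ≤ 1 ∧ ∃ σ : Equiv.Perm (Fin (N+1)), ∀ i : Fin (N+1),
      e (σ i) = if (i : ℕ) = 0 then (1 + Real.sqrt (1 - 4*R)) / 2
        else if (i : ℕ) = 1 then (1 - Real.sqrt (1 - 4*R)) / 2 else 0 := by
  obtain ⟨t, hsub, htcard⟩ := Finset.exists_superset_card_eq hcard
    (by simp [Fintype.card_fin]; omega)
  obtain ⟨p', q', hpq', ht⟩ := Finset.card_eq_two.mp htcard
  have hzero' : ∀ i, i ≠ p' → i ≠ q' → e i = 0 := by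
    intro i h1 h2
    by_contra h
    have : i ∈ t := hsub (Finset.mem_filter.mpr ⟨Finset.mem_univ i, h⟩)
    rw [ht, Finset.mem_insert, Finset.mem_singleton] at this
    tauto
  obtain ⟨p, q, hpq, hzero, hge⟩ : ∃ p q, p ≠ q ∧ (∀ i, i ≠ p → i ≠ q → e i = 0) ∧
      e q ≤ e p := by
    rcases le_total (e q') (e p') with h | h
    · exact ⟨p', q', hpq', hzero', h⟩
    · exact ⟨q', p', hpq'.symm, fun i h1 h2 => hzero' i h2 h1, h⟩
  have hsum' : e p + e q = 1 := by
    rw [← hsum, ← Finset.sum_pair hpq]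
    exact Finset.sum_subset (Finset.subset_univ _)
      (fun i _ hi => by
        simp only [Finset.mem_insert, Finset.mem_singleton, not_or] at hi
        exact hzero i hi.1 hi.2)
  have hsq' : (e p)^2 + (e q)^2 = 1 - 2*R := by
    rw [← hsq, show (e p)^2 + (e q)^2 = ∑ x ∈ ({p, q} : Finset (Fin (N+1))), (e x)^2
      from (Finset.sum_pair (f := fun i => (e i)^2) hpq).symm]
    exact Finset.sum_subset (Finset.subset_univ _)
      (fun i _ hi => by
        simp only [Finset.mem_insert, Finset.mem_singleton, not_or] at hi
        simp [hzero i hi.1 hi.2])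
  have hy : 0 ≤ e q := hnonneg q
  have h14 : 1 - 4*R = (e p - e q)^2 := by nlinarith [hsum', hsq']
  have hR : 1 - 4*R ≤ 1 := by nlinarith [hsum', hsq', hy, hnonneg p]
  refine ⟨by rw [h14]; positivity, hR, ?_⟩
  have hsqrt : Real.sqrt (1 - 4*R) = e p - e q := by
    rw [h14, Real.sqrt_sq (by linarith [hge])]
  set one' : Fin (N+1) := ⟨1, by omega⟩ with hone'
  have h01 : (0 : Fin (N+1)) ≠ one' := by
    intro h
    have := congrArg Fin.val h
    simp [hone'] at this
  set τ := Equiv.swap (0 : Fin (N+1)) p with hτ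
  set q₀ := τ.symm q with hq₀def
  have hτ0 : τ 0 = p := Equiv.swap_apply_left 0 p
  have hq₀ : τ q₀ = q := Equiv.apply_symm_apply τ q
  have hq₀0 : q₀ ≠ 0 := by
    intro h
    rw [h, hτ0] at hq₀
    exact hpq hq₀
  set σ := (Equiv.swap one' q₀).trans τ with hσ
  have hσ0 : σ 0 = p := by
    simp only [hσ, Equiv.trans_apply]
    rw [Equiv.swap_apply_of_ne_of_ne h01 (Ne.symm hq₀0), hτ0]
  have hσ1 : σ one' = q := by
    simp only [hσ, Equiv.trans_apply]
    rw [Equiv.swap_apply_left, hq₀]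
  refine ⟨σ, fun i => ?_⟩
  by_cases hi0 : (i : ℕ) = 0
  · have hieq : i = 0 := Fin.ext (by simpa using hi0)
    rw [hieq, hσ0]
    norm_num [hsqrt]
    linarith [hsum']
  · by_cases hi1 : (i : ℕ) = 1
    · have hieq : i = one' := Fin.ext (by simpa [hone'] using hi1)
      rw [hieq, hσ1]
      norm_num [hone', hsqrt]
      linarith [hsum']
    · rw [if_neg hi0, if_neg hi1]
      apply hzero
      · intro h
        rw [← hσ0] at h
        have h2 := σ.injective h
        rw [h2] at hi0
        simp at hi0
      · intro h
        rw [← hσ1] at h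
        have h2 := σ.injective h
        rw [h2] at hi1
        simp [hone'] at hi1


lemma mul_pureState {d e : ℕ} (T : Matrix (Fin e) (Fin d) ℂ) (w : EuclideanSpace ℂ (Fin d))
    (l l' : Fin e) :
    (T * pureState w * Tᴴ) l l' =
      (T.mulVec (fun i => w i)) l * star ((T.mulVec (fun i => w i)) l') := by
  simp only [Matrix.mul_apply, Matrix.conjTranspose_apply, pureState, Matrix.of_apply,
    Matrix.mulVec, dotProduct]
  rw [star_sum, Finset.sum_mul_sum]
  simp only [Finset.sum_mul]
  rw [Finset.sum_comm]
  apply Finset.sum_congr rfl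
  intro q _
  apply Finset.sum_congr rfl
  intro p _
  simp only [star_mul', Complex.star_def]
  ring

lemma eigenvalues_congr {n : ℕ} {M N : Matrix (Fin n) (Fin n) ℂ} (h : M = N)
    (hM : M.IsHermitian) (hN : N.IsHermitian) : hM.eigenvalues = hN.eigenvalues := by
  subst h; rfl

lemma trace2 (G : Matrix (Fin 2) (Fin 2) ℂ) :
    (G * G).trace = G 0 0 * G 0 0 + G 0 1 * G 1 0 + (G 1 0 * G 0 1 + G 1 1 * G 1 1) := by
  simp [Matrix.trace, Matrix.diag, Matrix.mul_apply, Fin.sum_univ_two]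
  try ring

lemma normSq_sum_eq {n : ℕ} (u : Fin n → ℂ) :
    ((∑ i, Complex.normSq (u i) : ℝ) : ℂ) = ∑ i, (starRingEnd ℂ) (u i) * u i := by
  push_cast
  exact Finset.sum_congr rfl fun l _ => Complex.normSq_eq_conj_mul_self


set_option maxHeartbeats 1000000 in
theorem stmt10 (m : ℕ) (hm : 1 ≤ m)
    (w : EuclideanSpace ℂ (Fin (m + 1 - 2 * 1 + 1))) (hw : ‖w‖ = 1) :
    0 ≤ 1 - 4 * Rval m w ∧ 1 - 4 * Rval m w ≤ 1 ∧
    ∃ hM : (eposic m 1 1 (pureState w)).IsHermitian,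
      ∃ σ : Equiv.Perm (Fin (m + 1)),
        ∀ i : Fin (m + 1), hM.eigenvalues (σ i) =
          if (i : ℕ) = 0 then (1 + Real.sqrt (1 - 4 * Rval m w)) / 2
          else if (i : ℕ) = 1 then (1 - Real.sqrt (1 - 4 * Rval m w)) / 2
          else 0 := by
  classical
  set w' : Fin (m + 1 - 2 * 1 + 1) → ℂ := fun i => w i with hw'def
  set u0 := (kraus m 1 1 0).mulVec w' with hu0
  set u1 := (kraus m 1 1 1).mulVec w' with hu1
  set a := ∑ i, Complex.normSq (u0 i) with ha
  set b := ∑ i, Complex.normSq (u1 i) with hb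
  set c := ∑ i, (starRingEnd ℂ) (u0 i) * (u1 i) with hc
  have hRval : Rval m w = a * b - Complex.normSq c := rfl
  set A : Matrix (Fin (m + 1)) (Fin 2) ℂ :=
    Matrix.of (fun l j => if j = 0 then u0 l else u1 l) with hA
  have hApp : ∀ l, A l 0 = u0 l ∧ A l 1 = u1 l := fun l => ⟨rfl, rfl⟩
  -- eposic = A * Aᴴ
  have hMeq : eposic m 1 1 (pureState w) = A * Aᴴ := by
    unfold eposic
    rw [Finset.sum_range_succ, Finset.sum_range_succ, Finset.sum_range_zero, zero_add]
    ext l l'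
    rw [Matrix.add_apply, mul_pureState, mul_pureState]
    simp only [Matrix.mul_apply, Matrix.conjTranspose_apply, hA, Matrix.of_apply,
      Fin.sum_univ_two]
    norm_num
    rfl
  have hherm : (eposic m 1 1 (pureState w)).IsHermitian := by
    rw [hMeq]; exact Matrix.isHermitian_mul_conjTranspose_self A
  set e := hherm.eigenvalues with he
  have hetrans : e = (Matrix.isHermitian_mul_conjTranspose_self A).eigenvalues :=
    eigenvalues_congr hMeq hherm _
  -- nonneg
  have hnonneg : ∀ i, 0 ≤ e i := fun i => by
    rw [hetrans]; exact Matrix.eigenvalues_self_mul_conjTranspose_nonneg A i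
  -- rank
  have hcard : (Finset.univ.filter (fun i => e i ≠ 0)).card ≤ 2 := by
    have h1 := hherm.rank_eq_card_non_zero_eigs
    have h2 : (eposic m 1 1 (pureState w)).rank ≤ 2 := by
      rw [hMeq]
      exact le_trans (Matrix.rank_mul_le_left A Aᴴ)
        (le_trans (Matrix.rank_le_card_width A) (by simp))
    rw [h1, Fintype.card_subtype] at h2
    exact h2
  -- traces
  obtain ⟨htr, htr2⟩ := herm_traces _ hherm
  -- a + b = 1
  have key : ∀ K : Matrix (Fin (m+1)) (Fin (m + 1 - 2 * 1 + 1)) ℂ,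
      (∑ l, (Complex.normSq (K.mulVec w' l) : ℂ)) =
        dotProduct (star w') ((Kᴴ * K).mulVec w') := by
    intro K
    rw [← Matrix.mulVec_mulVec, dotProduct_mulVec, ← Matrix.star_mulVec]
    simp only [dotProduct, Pi.star_apply, Complex.star_def]
    push_cast
    exact Finset.sum_congr rfl fun l _ => Complex.normSq_eq_conj_mul_self
  have hwnorm : ∑ i, Complex.normSq (w' i) = 1 := by
    have h1 := hw
    rw [EuclideanSpace.norm_eq] at h1
    have h2 : ∑ i, ‖w i‖^2 = 1 := by
      have h3 := Real.sqrt_eq_one.mp h1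
      linarith [h3]
    rw [← h2]
    exact Finset.sum_congr rfl fun i _ => by
      rw [Complex.normSq_eq_norm_sq]
  have hab : a + b = 1 := by
    have h1 : ((a : ℂ)) + b =
        dotProduct (star w')
          ((((kraus m 1 1 0)ᴴ * kraus m 1 1 0) + ((kraus m 1 1 1)ᴴ * kraus m 1 1 1)).mulVec w') := by
      rw [Matrix.add_mulVec, dotProduct_add, ← key, ← key, ha, hb]
      push_cast
      rfl
    rw [kraus_sum m hm, Matrix.one_mulVec] at h1
    have h2 : dotProduct (star w') w' = ((∑ i, Complex.normSq (w' i) : ℝ) : ℂ) := by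
      simp only [dotProduct, Pi.star_apply, Complex.star_def]
      push_cast
      exact Finset.sum_congr rfl fun l _ => (Complex.normSq_eq_conj_mul_self).symm
    rw [h2, hwnorm] at h1
    exact_mod_cast h1
  -- trace = a + b
  have htrace1 : (eposic m 1 1 (pureState w)).trace = ((a : ℂ) + b) := by
    rw [hMeq]
    have h1 : (A * Aᴴ).trace = ∑ l, (u0 l * (starRingEnd ℂ) (u0 l) + u1 l * (starRingEnd ℂ) (u1 l)) := by
      simp only [Matrix.trace, Matrix.diag, Matrix.mul_apply, Matrix.conjTranspose_apply,
        hA, Matrix.of_apply, Fin.sum_univ_two]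
      exact Finset.sum_congr rfl fun l _ => by norm_num [Complex.star_def]
    rw [h1, Finset.sum_add_distrib, ha, hb]
    push_cast
    congr 1
    · exact Finset.sum_congr rfl fun l _ => Complex.mul_conj (u0 l)
    · exact Finset.sum_congr rfl fun l _ => Complex.mul_conj (u1 l)
  -- Gram entries
  have hG00 : (Aᴴ * A) 0 0 = (a : ℂ) := by
    rw [Matrix.mul_apply, ha, normSq_sum_eq]
    exact Finset.sum_congr rfl fun l _ => by
      rw [Matrix.conjTranspose_apply, (hApp l).1, Complex.star_def]
  have hG11 : (Aᴴ * A) 1 1 = (b : ℂ) := by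
    rw [Matrix.mul_apply, hb, normSq_sum_eq]
    exact Finset.sum_congr rfl fun l _ => by
      rw [Matrix.conjTranspose_apply, (hApp l).2, Complex.star_def]
  have hG01 : (Aᴴ * A) 0 1 = c := by
    rw [Matrix.mul_apply, hc]
    exact Finset.sum_congr rfl fun l _ => by
      rw [Matrix.conjTranspose_apply, (hApp l).1, (hApp l).2, Complex.star_def]
  have hG10 : (Aᴴ * A) 1 0 = (starRingEnd ℂ) c := by
    rw [Matrix.mul_apply, hc, _root_.map_sum]
    exact Finset.sum_congr rfl fun l _ => by
      rw [Matrix.conjTranspose_apply, (hApp l).1, (hApp l).2, Complex.star_def,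
        _root_.map_mul, Complex.conj_conj]
      ring
  have hG : ((eposic m 1 1 (pureState w)) * (eposic m 1 1 (pureState w))).trace =
      ((a^2 + b^2 + 2 * Complex.normSq c : ℝ) : ℂ) := by
    rw [hMeq]
    have e1 : (A * Aᴴ) * (A * Aᴴ) = A * ((Aᴴ * A) * Aᴴ) := by
      simp only [Matrix.mul_assoc]
    have e2 : ((Aᴴ * A) * Aᴴ) * A = (Aᴴ * A) * (Aᴴ * A) := by
      simp only [Matrix.mul_assoc]
    rw [e1, Matrix.trace_mul_comm, e2, trace2, hG00, hG01, hG10, hG11]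
    have e3 : c * (starRingEnd ℂ) c = ((Complex.normSq c : ℝ) : ℂ) := Complex.mul_conj c
    have e4 : (starRingEnd ℂ) c * c = ((Complex.normSq c : ℝ) : ℂ) := by
      rw [mul_comm]; exact Complex.mul_conj c
    rw [e3, e4]
    push_cast
    ring
  -- real sums
  have hsum : ∑ i, e i = 1 := by
    have h1 : ((∑ i, e i : ℝ) : ℂ) = ((1 : ℝ) : ℂ) := by
      push_cast
      rw [← htr, htrace1]
      rw [show ((a:ℂ) + b) = (((a + b : ℝ)) : ℂ) by push_cast; ring, hab]
      norm_num
    exact_mod_cast h1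
  have hsq : ∑ i, (e i)^2 = 1 - 2 * Rval m w := by
    have h1 : ((∑ i, (e i)^2 : ℝ) : ℂ) = ((a^2 + b^2 + 2 * Complex.normSq c : ℝ) : ℂ) := by
      push_cast
      rw [← htr2, hG]
      push_cast
      ring
    have h2 : ∑ i, (e i)^2 = a^2 + b^2 + 2 * Complex.normSq c := by exact_mod_cast h1
    rw [h2, hRval]
    nlinarith [hab]
  obtain ⟨g1, g2, σ, hσ⟩ := perm_part m hm e (Rval m w) hnonneg hcard hsum hsq
  refine ⟨by linarith, by linarith, hherm, σ, fun i => ?_⟩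
  have h := hσ i
  convert h using 2 <;> ring_nf
end
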